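/- Neighbouring-plaquette orbit relation: let α and β be interior plaquettes of the n×n FPL domain sharing a common edge, with α a cell of the H_+ round (hence β a cell of the H_− round). Then for every φ ∈ Fpl(n,+): Σ_{φ′ ∈ O_G(φ)} N_α(φ′) = Σ_{φ′ ∈ O_G(H̃_+(φ))} N_β(φ′), where O_G denotes the orbit under G inside Fpl(n,+). -/

import Mathlib

open scoped Classical

/-! ### Link patterns

A link pattern on `2n` cyclically ordered points is a fixed-point-free noncrossing
involution.  The point `i : ZMod (2*n)` represents the label `lbl (2*n) i ∈ {1,…,2n}`
(so label arithmetic is arithmetic in `ZMod (2*n)`). -/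

instance instNeZeroTwoMul (n : ℕ) [NeZero n] : NeZero (2 * n) :=
  ⟨by have := NeZero.ne n; omega⟩

/-- The label in `{1,…,M}` represented by a point of `ZMod M`. -/
def lbl (M : ℕ) (i : ZMod M) : ℕ := if i.val = 0 then M else i.val

/-- A fixed-point-free involution of the `2n` points on a circle which is noncrossing. -/
def IsLinkPattern (n : ℕ) (f : ZMod (2 * n) → ZMod (2 * n)) : Prop :=
  Function.Involutive f ∧ (∀ i, f i ≠ i) ∧
    ∀ i j : ZMod (2 * n), ¬ (i.val < j.val ∧ j.val < (f i).val ∧ (f i).val < (f j).val)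

/-- The set `LP(n)` of link patterns on `2n` points, as a subtype. -/
abbrev LinkPattern (n : ℕ) := {f : ZMod (2 * n) → ZMod (2 * n) // IsLinkPattern n f}

/-- Rotation `R`: `R π` pairs `i-1` with `j-1` whenever `π` pairs `i` with `j`. -/
def rotMap (M : ℕ) (f : ZMod M → ZMod M) : ZMod M → ZMod M := fun i => f (i + 1) - 1

/-- Inverse rotation `R⁻¹`. -/
def rotInvMap (M : ℕ) (f : ZMod M → ZMod M) : ZMod M → ZMod M := fun i => f (i - 1) + 1

/-- The Temperley–Lieb map `e_j` (here `j : ZMod M` represents the label `lbl M j`):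
if `π` pairs `j` with `j+1` it does nothing, otherwise it re-pairs `j` with `j+1`
and `π(j)` with `π(j+1)`. -/
def eMap (M : ℕ) (j : ZMod M) (f : ZMod M → ZMod M) : ZMod M → ZMod M := fun i =>
  if f j = j + 1 then f i
  else if i = j then j + 1
  else if i = j + 1 then j
  else if i = f j then f (j + 1)
  else if i = f (j + 1) then f j
  else f i

/-! ### The `n × n` FPL domain

Vertices are `(x,y)` with `1 ≤ x,y ≤ n`.  `SqEdge.h x y` is the horizontal edge joining
`(x,y)` and `(x+1,y)` (valid for `0 ≤ x ≤ n`, `1 ≤ y ≤ n`; `x = 0` and `x = n` give the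
west/east external edges); `SqEdge.v x y` is the vertical edge joining `(x,y)` and
`(x,y+1)` (valid for `1 ≤ x ≤ n`, `0 ≤ y ≤ n`; `y = 0` and `y = n` give the south/north
external edges).  A configuration is a map `SqEdge → Bool` (`true` = black). -/

inductive SqEdge : Type
  | h : ℕ → ℕ → SqEdge
  | v : ℕ → ℕ → SqEdge
deriving DecidableEq

/-- Validity of an edge for the `n × n` domain. -/
def validB (n : ℕ) : SqEdge → Bool
  | .h x y => decide (x ≤ n) && decide (1 ≤ y) && decide (y ≤ n)
  | .v x y => decide (1 ≤ x) && decide (x ≤ n) && decide (y ≤ n)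

/-- The external edge with counterclockwise label `k ∈ {1,…,4n}`, starting from the
bottom external edge of the corner vertex `(1,1)`. -/
def extEdge (n k : ℕ) : SqEdge :=
  if k ≤ n then .v k 0
  else if k ≤ 2 * n then .h n (k - n)
  else if k ≤ 3 * n then .v (3 * n + 1 - k) n
  else .h 0 (4 * n + 1 - k)

def IsExternal (n : ℕ) (e : SqEdge) : Prop := ∃ k, 1 ≤ k ∧ k ≤ 4 * n ∧ e = extEdge n k

/-- The west, east, south, north edges incident to the vertex `(x,y)`. -/
def wEdge (x y : ℕ) : SqEdge := .h (x - 1) y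
def eEdge (x y : ℕ) : SqEdge := .h x y
def sEdge (x y : ℕ) : SqEdge := .v x (y - 1)
def nEdge (x y : ℕ) : SqEdge := .v x y

def IncidentAt (e : SqEdge) (x y : ℕ) : Prop :=
  e = wEdge x y ∨ e = eEdge x y ∨ e = sEdge x y ∨ e = nEdge x y

def blackDeg (φ : SqEdge → Bool) (x y : ℕ) : ℕ :=
  (if φ (wEdge x y) then 1 else 0) + (if φ (eEdge x y) then 1 else 0) +
    (if φ (sEdge x y) then 1 else 0) + (if φ (nEdge x y) then 1 else 0)

/-- A fully-packed loop configuration on the `n × n` domain: it is supported on the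
valid edges, and every vertex is incident to exactly two black (and two white) edges. -/
def IsFpl (n : ℕ) (φ : SqEdge → Bool) : Prop :=
  (∀ e, φ e = true → validB n e = true) ∧
    ∀ x y, 1 ≤ x → x ≤ n → 1 ≤ y → y ≤ n → blackDeg φ x y = 2

/-- Alternating boundary colouring `τ₊` (external label `1` black). -/
def BPlus (n : ℕ) (φ : SqEdge → Bool) : Prop :=
  ∀ k, 1 ≤ k → k ≤ 4 * n → (φ (extEdge n k) = true ↔ k % 2 = 1)

/-- Complementary alternating boundary colouring `τ₋`. -/
def BMinus (n : ℕ) (φ : SqEdge → Bool) : Prop :=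
  ∀ k, 1 ≤ k → k ≤ 4 * n → (φ (extEdge n k) = true ↔ k % 2 = 0)

/-- Two (valid) edges of colour `b` sharing an internal vertex. -/
def adjC (n : ℕ) (b : Bool) (φ : SqEdge → Bool) (e e' : SqEdge) : Prop :=
  e ≠ e' ∧ validB n e = true ∧ validB n e' = true ∧ φ e = b ∧ φ e' = b ∧
    ∃ x y, 1 ≤ x ∧ x ≤ n ∧ 1 ≤ y ∧ y ≤ n ∧ IncidentAt e x y ∧ IncidentAt e' x y

/-- Connectivity through monochromatic paths of colour `b`. -/
def Conn (n : ℕ) (b : Bool) (φ : SqEdge → Bool) : SqEdge → SqEdge → Prop :=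
  Relation.ReflTransGen (adjC n b φ)

/-- In `Fpl(n,+)` the black external edge with black label `t ∈ {1,…,2n}` has overall
label `2t-1`.  `φ` has link pattern (matching) `g` iff for every point `i` the black
external edges with black labels `lbl i` and `lbl (g i)` are joined by a black path. -/
def RealizesP (n : ℕ) (φ : SqEdge → Bool) (g : ZMod (2 * n) → ZMod (2 * n)) : Prop :=
  ∀ i, Conn n true φ (extEdge n (2 * lbl (2 * n) i - 1)) (extEdge n (2 * lbl (2 * n) (g i) - 1))

/-- In `Fpl(n,-)` the black external edge with black label `t` has overall label `2t`
(black labelling starting from the bottom external edge of the vertex `(2,1)`). -/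
def RealizesM (n : ℕ) (φ : SqEdge → Bool) (g : ZMod (2 * n) → ZMod (2 * n)) : Prop :=
  ∀ i, Conn n true φ (extEdge n (2 * lbl (2 * n) i)) (extEdge n (2 * lbl (2 * n) (g i)))

/-- `Ψ_{n,+}(g)`: the number of FPLs in `Fpl(n,+)` with link pattern `g`. -/
noncomputable def PsiP (n : ℕ) (g : ZMod (2 * n) → ZMod (2 * n)) : ℕ :=
  Set.ncard {φ : SqEdge → Bool | IsFpl n φ ∧ BPlus n φ ∧ RealizesP n φ g}

/-- `Ψ_{n,-}(g)`: the number of FPLs in `Fpl(n,-)` with link pattern `g`. -/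
noncomputable def PsiM (n : ℕ) (g : ZMod (2 * n) → ZMod (2 * n)) : ℕ :=
  Set.ncard {φ : SqEdge → Bool | IsFpl n φ ∧ BMinus n φ ∧ RealizesM n φ g}

/-- The plaquette with lower-left corner `(x,y)` (for `1 ≤ x,y ≤ n-1`) has horizontal
edges `.h x y`, `.h x (y+1)` and vertical edges `.v x y`, `.v (x+1) y`.
`Nplaq φ x y` is `+1` if both horizontal edges are black and both vertical edges white,
`-1` in the complementary case, and `0` otherwise. -/
def Nplaq (φ : SqEdge → Bool) (x y : ℕ) : ℤ :=
  if φ (.h x y) = true ∧ φ (.h x (y + 1)) = true ∧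
      φ (.v x y) = false ∧ φ (.v (x + 1) y) = false then 1
  else if φ (.h x y) = false ∧ φ (.h x (y + 1)) = false ∧
      φ (.v x y) = true ∧ φ (.v (x + 1) y) = true then -1
  else 0

/-! ### Wieland gyration on the `n × n` domain.

For `H₊` the external edges are glued in the pairs `(1,2),(3,4),…`; the cells of the
resulting partition of the edge set are the interior plaquettes `(x,y)` with `x+y` odd,
together with boundary cells (of length 2 or 3) through the glued vertices.  For `H₋`
(pairs `(2,3),(4,5),…,(4n,1)`) the interior cells are the plaquettes with `x+y` even.
`H₊/H₋` complement the colours on every cell except the alternating 4-cells (interior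
plaquettes whose colours alternate), which are kept fixed. -/

/-- The interior cell (plaquette of parity `p`) containing the edge `e`, if any;
edges in no interior plaquette of parity `p` lie in a boundary cell. -/
def plaqOf (n p : ℕ) : SqEdge → Option (ℕ × ℕ)
  | .h x y =>
    if 1 ≤ x ∧ x ≤ n - 1 ∧ 1 ≤ y ∧ y ≤ n - 1 ∧ (x + y) % 2 = p then some (x, y)
    else if 1 ≤ x ∧ x ≤ n - 1 ∧ 2 ≤ y ∧ y ≤ n ∧ (x + y - 1) % 2 = p then some (x, y - 1)
    else none
  | .v x y =>
    if 1 ≤ x ∧ x ≤ n - 1 ∧ 1 ≤ y ∧ y ≤ n - 1 ∧ (x + y) % 2 = p then some (x, y)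
    else if 2 ≤ x ∧ x ≤ n ∧ 1 ≤ y ∧ y ≤ n - 1 ∧ (x + y - 1) % 2 = p then some (x - 1, y)
    else none

/-- Colours alternate around the plaquette `(x,y)`. -/
def altPlaq (φ : SqEdge → Bool) (x y : ℕ) : Bool :=
  (φ (.h x y) == φ (.h x (y + 1))) && (φ (.v x y) == φ (.v (x + 1) y)) &&
    (φ (.h x y) != φ (.v x y))

/-- One gyration round on the cells of parity `p`. -/
def gyrHalf (n p : ℕ) (φ : SqEdge → Bool) : SqEdge → Bool := fun e =>
  if validB n e then
    match plaqOf n p e with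
    | some (x, y) => if altPlaq φ x y then φ e else !(φ e)
    | none => !(φ e)
  else false

/-- The gyration round `H₊` (interior cells: plaquettes with `x+y` odd). -/
def Hplus (n : ℕ) : (SqEdge → Bool) → SqEdge → Bool := gyrHalf n 1

/-- The gyration round `H₋` (interior cells: plaquettes with `x+y` even). -/
def Hminus (n : ℕ) : (SqEdge → Bool) → SqEdge → Bool := gyrHalf n 0

/-- Wieland's gyration `G = H₋ ∘ H₊`. -/
def gyr (n : ℕ) (φ : SqEdge → Bool) : SqEdge → Bool := Hminus n (Hplus n φ)

/-- Complementation of the colours of all (valid) edges. -/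
def complV (n : ℕ) (φ : SqEdge → Bool) : SqEdge → Bool := fun e =>
  if validB n e then !(φ e) else false

/-- `H̃₊`: the round `H₊` followed by complementation (a map `Fpl(n,+) → Fpl(n,+)`). -/
def Htp (n : ℕ) (φ : SqEdge → Bool) : SqEdge → Bool := complV n (Hplus n φ)

/-- The orbit `{G^k φ : k ≥ 0}` of `φ` under gyration. -/
def orbitG (n : ℕ) (φ : SqEdge → Bool) : Set (SqEdge → Bool) :=
  Set.range fun k => (gyr n)^[k] φ



/-! ### Auxiliary development for the neighbouring-plaquette orbit relation -/

namespace RSaux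

/-- Configurations vanishing on invalid edges. -/
def ZC (n : ℕ) (ψ : SqEdge → Bool) : Prop := ∀ e, validB n e = false → ψ e = false

lemma ZC_gyrHalf (n p : ℕ) (ψ : SqEdge → Bool) : ZC n (gyrHalf n p ψ) := by
  intro e hv; simp [gyrHalf, hv]

lemma ZC_complV (n : ℕ) (ψ : SqEdge → Bool) : ZC n (complV n ψ) := by
  intro e hv; simp [complV, hv]

lemma ZC_gyr (n : ℕ) (ψ : SqEdge → Bool) : ZC n (gyr n ψ) := ZC_gyrHalf n 0 _

lemma ZC_iter (n : ℕ) {φ : SqEdge → Bool} (hZ : ZC n φ) (k : ℕ) :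
    ZC n ((gyr n)^[k] φ) := by
  induction k with
  | zero => exact hZ
  | succ k ih => rw [Function.iterate_succ_apply']; exact ZC_gyr n _

lemma plaqOf_bounds {n p : ℕ} {e : SqEdge} {a b : ℕ} (h : plaqOf n p e = some (a, b)) :
    1 ≤ a ∧ a ≤ n - 1 ∧ 1 ≤ b ∧ b ≤ n - 1 ∧ (a + b) % 2 = p := by
  cases e with
  | h u v =>
    simp only [plaqOf] at h
    split_ifs at h with h1 h2 <;>
      simp only [Option.some.injEq, Prod.mk.injEq] at h <;> omega
  | v u v =>
    simp only [plaqOf] at h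
    split_ifs at h with h1 h2 <;>
      simp only [Option.some.injEq, Prod.mk.injEq] at h <;> omega

lemma plaqOf_mem {n p : ℕ} {e : SqEdge} {a b : ℕ} (h : plaqOf n p e = some (a, b)) :
    e = .h a b ∨ e = .h a (b + 1) ∨ e = .v a b ∨ e = .v (a + 1) b := by
  cases e with
  | h u v =>
    simp only [plaqOf] at h
    split_ifs at h with h1 h2 <;>
      simp only [Option.some.injEq, Prod.mk.injEq] at h <;>
      simp only [SqEdge.h.injEq, SqEdge.v.injEq] <;> omega
  | v u v =>
    simp only [plaqOf] at h
    split_ifs at h with h1 h2 <;>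
      simp only [Option.some.injEq, Prod.mk.injEq] at h <;>
      simp only [SqEdge.h.injEq, SqEdge.v.injEq] <;> omega

lemma plaqOf_cell {n p a b : ℕ} (h1 : 1 ≤ a) (h2 : a ≤ n - 1) (h3 : 1 ≤ b)
    (h4 : b ≤ n - 1) (h5 : (a + b) % 2 = p) :
    plaqOf n p (.h a b) = some (a, b) ∧ plaqOf n p (.h a (b + 1)) = some (a, b) ∧
    plaqOf n p (.v a b) = some (a, b) ∧ plaqOf n p (.v (a + 1) b) = some (a, b) := by
  refine ⟨?_, ?_, ?_, ?_⟩
  · simp only [plaqOf]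
    rw [if_pos ⟨h1, h2, h3, h4, h5⟩]
  · simp only [plaqOf]
    have hneg : ¬(1 ≤ a ∧ a ≤ n - 1 ∧ 1 ≤ b + 1 ∧ b + 1 ≤ n - 1 ∧ (a + (b + 1)) % 2 = p) := by
      omega
    rw [if_neg hneg,
      if_pos (show 1 ≤ a ∧ a ≤ n - 1 ∧ 2 ≤ b + 1 ∧ b + 1 ≤ n ∧ (a + (b + 1) - 1) % 2 = p
        by omega)]
    simp only [Option.some.injEq, Prod.mk.injEq]
    constructor <;> first | trivial | omega
  · simp only [plaqOf]
    rw [if_pos ⟨h1, h2, h3, h4, h5⟩]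
  · simp only [plaqOf]
    have hneg : ¬(1 ≤ a + 1 ∧ a + 1 ≤ n - 1 ∧ 1 ≤ b ∧ b ≤ n - 1 ∧ (a + 1 + b) % 2 = p) := by
      omega
    rw [if_neg hneg,
      if_pos (show 2 ≤ a + 1 ∧ a + 1 ≤ n ∧ 1 ≤ b ∧ b ≤ n - 1 ∧ (a + 1 + b - 1) % 2 = p
        by omega)]
    simp only [Option.some.injEq, Prod.mk.injEq]
    constructor <;> first | trivial | omega

lemma valid_cell {n a b : ℕ} (h1 : 1 ≤ a) (h2 : a ≤ n - 1) (h3 : 1 ≤ b) (h4 : b ≤ n - 1) :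
    validB n (.h a b) = true ∧ validB n (.h a (b + 1)) = true ∧
    validB n (.v a b) = true ∧ validB n (.v (a + 1) b) = true := by
  refine ⟨?_, ?_, ?_, ?_⟩ <;> simp only [validB, Bool.and_eq_true, decide_eq_true_eq] <;>
    omega

lemma gyrHalf_eq_cell {n p : ℕ} {ψ : SqEdge → Bool} {e : SqEdge} {a b : ℕ}
    (hv : validB n e = true) (hp : plaqOf n p e = some (a, b)) :
    gyrHalf n p ψ e = if altPlaq ψ a b then ψ e else !(ψ e) := by
  simp [gyrHalf, hv, hp]

lemma gyrHalf_eq_none {n p : ℕ} {ψ : SqEdge → Bool} {e : SqEdge}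
    (hv : validB n e = true) (hp : plaqOf n p e = none) :
    gyrHalf n p ψ e = !(ψ e) := by
  simp [gyrHalf, hv, hp]

lemma complV_valid {n : ℕ} {ψ : SqEdge → Bool} {e : SqEdge} (hv : validB n e = true) :
    complV n ψ e = !(ψ e) := by
  simp [complV, hv]

lemma altPlaq_congr {ψ ψ' : SqEdge → Bool} {a b : ℕ}
    (e1 : ψ' (.h a b) = ψ (.h a b)) (e2 : ψ' (.h a (b + 1)) = ψ (.h a (b + 1)))
    (e3 : ψ' (.v a b) = ψ (.v a b)) (e4 : ψ' (.v (a + 1) b) = ψ (.v (a + 1) b)) :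
    altPlaq ψ' a b = altPlaq ψ a b := by
  simp only [altPlaq, e1, e2, e3, e4]

lemma altPlaq_flip {ψ ψ' : SqEdge → Bool} {a b : ℕ}
    (e1 : ψ' (.h a b) = !(ψ (.h a b))) (e2 : ψ' (.h a (b + 1)) = !(ψ (.h a (b + 1))))
    (e3 : ψ' (.v a b) = !(ψ (.v a b))) (e4 : ψ' (.v (a + 1) b) = !(ψ (.v (a + 1) b))) :
    altPlaq ψ' a b = altPlaq ψ a b := by
  simp only [altPlaq, e1, e2, e3, e4]
  cases ψ (.h a b) <;> cases ψ (.h a (b + 1)) <;> cases ψ (.v a b) <;>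
    cases ψ (.v (a + 1) b) <;> rfl

lemma gyrHalf_invol {n p : ℕ} {ψ : SqEdge → Bool} (hZ : ZC n ψ) :
    gyrHalf n p (gyrHalf n p ψ) = ψ := by
  funext e
  by_cases hv : validB n e = true
  · cases hp : plaqOf n p e with
    | none =>
        rw [gyrHalf_eq_none hv hp, gyrHalf_eq_none hv hp, Bool.not_not]
    | some ab =>
        obtain ⟨a, b⟩ := ab
        obtain ⟨h1, h2, h3, h4, h5⟩ := plaqOf_bounds hp
        obtain ⟨p1, p2, p3, p4⟩ := plaqOf_cell (n := n) h1 h2 h3 h4 h5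
        obtain ⟨v1, v2, v3, v4⟩ := valid_cell (n := n) h1 h2 h3 h4
        have E1 := gyrHalf_eq_cell (ψ := ψ) v1 p1
        have E2 := gyrHalf_eq_cell (ψ := ψ) v2 p2
        have E3 := gyrHalf_eq_cell (ψ := ψ) v3 p3
        have E4 := gyrHalf_eq_cell (ψ := ψ) v4 p4
        have halt : altPlaq (gyrHalf n p ψ) a b = altPlaq ψ a b := by
          by_cases ha : altPlaq ψ a b = true
          · exact altPlaq_congr (by rw [E1, if_pos ha]) (by rw [E2, if_pos ha])
              (by rw [E3, if_pos ha]) (by rw [E4, if_pos ha])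
          · exact altPlaq_flip (by rw [E1, if_neg ha]) (by rw [E2, if_neg ha])
              (by rw [E3, if_neg ha]) (by rw [E4, if_neg ha])
        rw [gyrHalf_eq_cell hv hp, halt, gyrHalf_eq_cell hv hp]
        by_cases ha : altPlaq ψ a b = true
        · rw [if_pos ha, if_pos ha]
        · rw [if_neg ha, if_neg ha, Bool.not_not]
  · have hv' : validB n e = false := by simpa using hv
    simp [gyrHalf, hv', hZ e hv']

lemma complV_invol {n : ℕ} {ψ : SqEdge → Bool} (hZ : ZC n ψ) :
    complV n (complV n ψ) = ψ := by
  funext e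
  by_cases hv : validB n e = true
  · rw [complV_valid hv, complV_valid hv, Bool.not_not]
  · have hv' : validB n e = false := by simpa using hv
    simp [complV, hv', hZ e hv']

lemma complV_gyrHalf {n p : ℕ} {ψ : SqEdge → Bool} :
    complV n (gyrHalf n p ψ) = gyrHalf n p (complV n ψ) := by
  funext e
  by_cases hv : validB n e = true
  · cases hp : plaqOf n p e with
    | none =>
        rw [complV_valid hv, gyrHalf_eq_none hv hp, gyrHalf_eq_none hv hp,
          complV_valid hv]
    | some ab =>
        obtain ⟨a, b⟩ := ab
        obtain ⟨h1, h2, h3, h4, h5⟩ := plaqOf_bounds hp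
        obtain ⟨v1, v2, v3, v4⟩ := valid_cell (n := n) h1 h2 h3 h4
        have halt : altPlaq (complV n ψ) a b = altPlaq ψ a b :=
          altPlaq_flip (complV_valid v1) (complV_valid v2) (complV_valid v3)
            (complV_valid v4)
        rw [complV_valid hv, gyrHalf_eq_cell hv hp, gyrHalf_eq_cell hv hp, halt,
          complV_valid hv]
        by_cases ha : altPlaq ψ a b = true
        · rw [if_pos ha, if_pos ha]
        · rw [if_neg ha, if_neg ha]
  · have hv' : validB n e = false := by simpa using hv
    simp [complV, gyrHalf, hv']

/-- The sign `ε` associated to an edge. -/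
def epsE : SqEdge → ℤ
  | .h _ _ => -1
  | .v _ _ => 1

/-- The contribution `N` of the parity-`p` cell containing `e` (0 if none). -/
def NcellE (n p : ℕ) (ψ : SqEdge → Bool) (e : SqEdge) : ℤ :=
  match plaqOf n p e with
  | some (a, b) => Nplaq ψ a b
  | none => 0

lemma key_local {n p : ℕ} {ψ : SqEdge → Bool} {e : SqEdge} (hv : validB n e = true) :
    ((if complV n (gyrHalf n p ψ) e then (1 : ℤ) else 0) - (if ψ e then 1 else 0))
      = epsE e * NcellE n p ψ e := by
  cases hp : plaqOf n p e with
  | none =>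
      rw [complV_valid hv, gyrHalf_eq_none hv hp]
      cases he : ψ e <;> simp [NcellE, hp, he]
  | some ab =>
      obtain ⟨a, b⟩ := ab
      rw [complV_valid hv, gyrHalf_eq_cell hv hp]
      have hm := plaqOf_mem hp
      simp only [NcellE, hp]
      rcases hm with rfl | rfl | rfl | rfl <;>
      · simp only [altPlaq, Nplaq, epsE]
        rcases Bool.eq_false_or_eq_true (ψ (.h a b)) with hA | hA <;>
          rcases Bool.eq_false_or_eq_true (ψ (.h a (b + 1))) with hB | hB <;>
          rcases Bool.eq_false_or_eq_true (ψ (.v a b)) with hC | hC <;>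
          rcases Bool.eq_false_or_eq_true (ψ (.v (a + 1) b)) with hD | hD <;>
          simp only [hA, hB, hC, hD] <;> decide

/-! ### Dynamics of gyration -/

/-- The inverse of gyration. -/
def gyrInv (n : ℕ) (ψ : SqEdge → Bool) : SqEdge → Bool := gyrHalf n 1 (gyrHalf n 0 ψ)

lemma ZC_gyrInv (n : ℕ) (ψ : SqEdge → Bool) : ZC n (gyrInv n ψ) := ZC_gyrHalf n 1 _

lemma ZC_Htp (n : ℕ) (ψ : SqEdge → Bool) : ZC n (Htp n ψ) := ZC_complV n _

lemma ZC_iterInv (n : ℕ) {φ : SqEdge → Bool} (hZ : ZC n φ) (k : ℕ) :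
    ZC n ((gyrInv n)^[k] φ) := by
  induction k with
  | zero => exact hZ
  | succ k ih => rw [Function.iterate_succ_apply']; exact ZC_gyrInv n _

lemma gyrInv_gyr {n : ℕ} {ψ : SqEdge → Bool} (hZ : ZC n ψ) : gyrInv n (gyr n ψ) = ψ := by
  show gyrHalf n 1 (gyrHalf n 0 (gyrHalf n 0 (gyrHalf n 1 ψ))) = ψ
  rw [gyrHalf_invol (ZC_gyrHalf n 1 ψ), gyrHalf_invol hZ]

lemma gyr_gyrInv {n : ℕ} {ψ : SqEdge → Bool} (hZ : ZC n ψ) : gyr n (gyrInv n ψ) = ψ := by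
  show gyrHalf n 0 (gyrHalf n 1 (gyrHalf n 1 (gyrHalf n 0 ψ))) = ψ
  rw [gyrHalf_invol (ZC_gyrHalf n 0 ψ), gyrHalf_invol hZ]

lemma gyrInv_iter_gyr {n : ℕ} {ψ : SqEdge → Bool} (hZ : ZC n ψ) (k : ℕ) :
    (gyrInv n)^[k] ((gyr n)^[k] ψ) = ψ := by
  induction k with
  | zero => rfl
  | succ k ih =>
      rw [Function.iterate_succ_apply' (gyr n), Function.iterate_succ_apply (gyrInv n),
        gyrInv_gyr (ZC_iter n hZ k), ih]

lemma gyr_iter_gyrInv {n : ℕ} {ψ : SqEdge → Bool} (hZ : ZC n ψ) (k : ℕ) :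
    (gyr n)^[k] ((gyrInv n)^[k] ψ) = ψ := by
  induction k with
  | zero => rfl
  | succ k ih =>
      rw [Function.iterate_succ_apply' (gyrInv n), Function.iterate_succ_apply (gyr n),
        gyr_gyrInv (ZC_iterInv n hZ k), ih]

lemma gyr_decomp (n : ℕ) (ψ : SqEdge → Bool) :
    gyr n ψ = complV n (gyrHalf n 0 (Htp n ψ)) := by
  show gyrHalf n 0 (gyrHalf n 1 ψ)
      = complV n (gyrHalf n 0 (complV n (gyrHalf n 1 ψ)))
  rw [complV_gyrHalf, complV_invol (ZC_gyrHalf n 1 ψ)]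

lemma Htp_invol {n : ℕ} {ψ : SqEdge → Bool} (hZ : ZC n ψ) : Htp n (Htp n ψ) = ψ := by
  show complV n (gyrHalf n 1 (complV n (gyrHalf n 1 ψ))) = ψ
  rw [← complV_gyrHalf (n := n) (p := 1), gyrHalf_invol hZ, complV_invol hZ]

lemma gyr_Htp {n : ℕ} {ψ : SqEdge → Bool} (hZ : ZC n ψ) :
    gyr n (Htp n ψ) = Htp n (gyrInv n ψ) := by
  have h1 : gyr n (Htp n ψ) = complV n (gyrHalf n 0 (gyrHalf n 1 (gyrHalf n 1 ψ))) := by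
    show gyrHalf n 0 (gyrHalf n 1 (complV n (gyrHalf n 1 ψ))) = _
    rw [← complV_gyrHalf (n := n) (p := 1), ← complV_gyrHalf (n := n) (p := 0)]
  rw [h1, gyrHalf_invol hZ]
  show _ = complV n (gyrHalf n 1 (gyrHalf n 1 (gyrHalf n 0 ψ)))
  rw [gyrHalf_invol (ZC_gyrHalf n 0 ψ)]

lemma iter_gyr_Htp {n : ℕ} {φ : SqEdge → Bool} (hZ : ZC n φ) (k : ℕ) :
    (gyr n)^[k] (Htp n φ) = Htp n ((gyrInv n)^[k] φ) := by
  induction k generalizing φ hZ with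
  | zero => rfl
  | succ k ih =>
      rw [Function.iterate_succ_apply (gyr n), Function.iterate_succ_apply (gyrInv n),
        gyr_Htp hZ, ih (ZC_gyrInv n φ)]

lemma iter_mul_period {n L : ℕ} {φ : SqEdge → Bool} (hL : (gyr n)^[L] φ = φ) (q : ℕ) :
    (gyr n)^[L * q] φ = φ := by
  induction q with
  | zero => simp
  | succ q ih => rw [Nat.mul_succ, Function.iterate_add_apply, hL, ih]

lemma iter_mod {n L : ℕ} {φ : SqEdge → Bool} (hL : (gyr n)^[L] φ = φ) (k : ℕ) :
    (gyr n)^[k] φ = (gyr n)^[k % L] φ := by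
  conv_lhs => rw [show k = k % L + L * (k / L) from (Nat.mod_add_div k L).symm]
  rw [Function.iterate_add_apply, iter_mul_period hL]

lemma period_cancel {n : ℕ} {φ : SqEdge → Bool} (hZ : ZC n φ) {i j : ℕ} (hij : i ≤ j)
    (h : (gyr n)^[i] φ = (gyr n)^[j] φ) : (gyr n)^[j - i] φ = φ := by
  have h1 : (gyr n)^[i] ((gyr n)^[j - i] φ) = (gyr n)^[i] φ := by
    rw [← Function.iterate_add_apply, show i + (j - i) = j from by omega, h]
  have h2 := congrArg ((gyrInv n)^[i]) h1
  rwa [gyrInv_iter_gyr (ZC_iter n hZ _) i, gyrInv_iter_gyr hZ i] at h2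

lemma gyrInv_iter_eq {n L : ℕ} {φ : SqEdge → Bool} (hZ : ZC n φ)
    (hL : (gyr n)^[L] φ = φ) {k : ℕ} (hk : k ≤ L) :
    (gyrInv n)^[k] φ = (gyr n)^[L - k] φ := by
  have h1 : (gyr n)^[k] ((gyr n)^[L - k] φ) = φ := by
    rw [← Function.iterate_add_apply, show k + (L - k) = L from by omega, hL]
  have h2 := congrArg ((gyrInv n)^[k]) h1
  rw [gyrInv_iter_gyr (ZC_iter n hZ _) k] at h2
  exact h2.symm

lemma exists_period {n : ℕ} {φ : SqEdge → Bool} (hZ : ZC n φ) :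
    ∃ L, 1 ≤ L ∧ (gyr n)^[L] φ = φ := by
  have hinj : ∀ ψ χ : SqEdge → Bool, ZC n ψ → ZC n χ →
      (fun (q : Fin (n+1) × Fin (n+1) × Bool) =>
        ψ (if q.2.2 then .h q.1 q.2.1 else .v q.1 q.2.1))
      = (fun (q : Fin (n+1) × Fin (n+1) × Bool) =>
        χ (if q.2.2 then .h q.1 q.2.1 else .v q.1 q.2.1)) → ψ = χ := by
    intro ψ χ hψ hχ h
    funext e
    by_cases hv : validB n e = true
    · cases e with
      | h u v =>
          have hb : (u ≤ n ∧ 1 ≤ v) ∧ v ≤ n := by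
            simpa [validB, Bool.and_eq_true, decide_eq_true_eq] using hv
          have := congrFun h (⟨u, by omega⟩, ⟨v, by omega⟩, true)
          simpa using this
      | v u v =>
          have hb : (1 ≤ u ∧ u ≤ n) ∧ v ≤ n := by
            simpa [validB, Bool.and_eq_true, decide_eq_true_eq] using hv
          have := congrFun h (⟨u, by omega⟩, ⟨v, by omega⟩, false)
          simpa using this
    · have hv' : validB n e = false := by simpa using hv
      rw [hψ e hv', hχ e hv']
  obtain ⟨i, j, hne, hEq⟩ := Finite.exists_ne_map_eq_of_infinite
    (fun k : ℕ => fun (q : Fin (n+1) × Fin (n+1) × Bool) =>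
      ((gyr n)^[k] φ) (if q.2.2 then .h q.1 q.2.1 else .v q.1 q.2.1))
  have hEq' : (gyr n)^[i] φ = (gyr n)^[j] φ :=
    hinj _ _ (ZC_iter n hZ i) (ZC_iter n hZ j) hEq
  rcases Nat.lt_or_ge i j with h | h
  · exact ⟨j - i, by omega, period_cancel hZ (le_of_lt h) hEq'⟩
  · have hji : j < i := by omega
    exact ⟨i - j, by omega, period_cancel hZ (le_of_lt hji) hEq'.symm⟩


/-! ### Cell contributions of horizontal edges -/

lemma NcellE_h_match {n p x Y : ℕ} (h1 : 1 ≤ x) (h2 : x ≤ n - 1) (h3 : 1 ≤ Y)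
    (h4 : Y ≤ n - 1) (hp : (x + Y) % 2 = p) (ψ : SqEdge → Bool) :
    NcellE n p ψ (.h x Y) = Nplaq ψ x Y := by
  have hq := (plaqOf_cell h1 h2 h3 h4 hp).1
  simp [NcellE, hq]

lemma NcellE_h_step {n p x Y : ℕ} (h1 : 1 ≤ x) (h2 : x ≤ n - 1) (h3 : 1 ≤ Y)
    (h4 : Y + 1 ≤ n - 1) (hp : (x + Y) % 2 = p) (ψ : SqEdge → Bool) :
    NcellE n p ψ (.h x (Y + 1)) = Nplaq ψ x Y := by
  have hq : plaqOf n p (.h x (Y + 1)) = some (x, Y) :=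
    (plaqOf_cell h1 h2 h3 (by omega) hp).2.1
  simp [NcellE, hq]

lemma NcellE_h_bottom {n p x : ℕ} (h1 : 1 ≤ x) (h2 : x ≤ n - 1)
    (hp : (x + 1) % 2 ≠ p) (ψ : SqEdge → Bool) :
    NcellE n p ψ (.h x 1) = 0 := by
  have hq : plaqOf n p (.h x 1) = none := by
    simp only [plaqOf]
    have hn1 : ¬(1 ≤ x ∧ x ≤ n - 1 ∧ 1 ≤ 1 ∧ 1 ≤ n - 1 ∧ (x + 1) % 2 = p) := by omega
    have hn2 : ¬(1 ≤ x ∧ x ≤ n - 1 ∧ 2 ≤ 1 ∧ 1 ≤ n ∧ (x + 1 - 1) % 2 = p) := by omega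
    rw [if_neg hn1, if_neg hn2]
  simp [NcellE, hq]

end RSaux

/-- **Neighbouring-plaquette orbit relation.**  If plaquettes `α = (x,y)` (a cell of
the `H₊` round, i.e. `x+y` odd) and `β = (x',y')` share an edge, then the orbit sums
of `N_α` along the `G`-orbit of `φ` and of `N_β` along the `G`-orbit of `H̃₊(φ)`
coincide. -/
theorem neighbouring_plaquette_orbit_relation (n : ℕ) (hn : 1 ≤ n)
    (x y x' y' : ℕ)
    (hα : 1 ≤ x ∧ x ≤ n - 1 ∧ 1 ≤ y ∧ y ≤ n - 1)
    (hβ : 1 ≤ x' ∧ x' ≤ n - 1 ∧ 1 ≤ y' ∧ y' ≤ n - 1)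
    (hpar : (x + y) % 2 = 1)
    (hadj : (x' = x ∧ (y' = y + 1 ∨ y' + 1 = y)) ∨ (y' = y ∧ (x' = x + 1 ∨ x' + 1 = x)))
    (φ : SqEdge → Bool) (hφ : IsFpl n φ ∧ BPlus n φ) :
    ∑ᶠ ψ ∈ orbitG n φ, Nplaq ψ x y = ∑ᶠ ψ ∈ orbitG n (Htp n φ), Nplaq ψ x' y' := by
  classical
  obtain ⟨hFpl, hB⟩ := hφ
  obtain ⟨hx1, hx2, hy1, hy2⟩ := hα
  obtain ⟨hx1', hx2', hy1', hy2'⟩ := hβ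
  have hZ : RSaux.ZC n φ := by
    intro e hv
    cases hφe : φ e
    · rfl
    · have := hFpl.1 e hφe
      rw [hv] at this
      cases this
  -- the minimal period `L` of the gyration orbit of `φ`
  have hex := RSaux.exists_period hZ
  obtain ⟨hL1, hL⟩ := Nat.find_spec hex
  set L := Nat.find hex with hLdef
  have hmin : ∀ m, m < L → ¬(1 ≤ m ∧ (gyr n)^[m] φ = φ) := fun m hm => Nat.find_min hex hm
  have hcancel : ∀ i j : ℕ, i < j → j < L → (gyr n)^[i] φ = (gyr n)^[j] φ → False := by
    intro i j hij hjL hEq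
    exact hmin (j - i) (by omega) ⟨by omega, RSaux.period_cancel hZ hij.le hEq⟩
  have hinj : ∀ i ∈ Finset.range L, ∀ j ∈ Finset.range L,
      (gyr n)^[i] φ = (gyr n)^[j] φ → i = j := by
    intro i hi j hj hEq
    by_contra hne
    rcases Nat.lt_or_ge i j with h | h
    · exact hcancel i j h (Finset.mem_range.mp hj) hEq
    · exact hcancel j i (by omega) (Finset.mem_range.mp hi) hEq.symm
  have horb : orbitG n φ = ↑((Finset.range L).image fun k => (gyr n)^[k] φ) := by
    ext ψ
    simp only [orbitG, Set.mem_range, Finset.coe_image, Set.mem_image, Finset.mem_coe,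
      Finset.mem_range]
    constructor
    · rintro ⟨k, rfl⟩
      exact ⟨k % L, Nat.mod_lt _ (by omega), (RSaux.iter_mod hL k).symm⟩
    · rintro ⟨k, _, hk⟩
      exact ⟨k, hk⟩
  have hLHS : (∑ᶠ ψ ∈ orbitG n φ, Nplaq ψ x y)
      = ∑ k ∈ Finset.range L, Nplaq ((gyr n)^[k] φ) x y := by
    rw [horb, finsum_mem_coe_finset, Finset.sum_image hinj]
  -- the orbit of `Htp φ` has the same period
  have hZ' : RSaux.ZC n (Htp n φ) := RSaux.ZC_Htp n φ
  have hiff : ∀ m : ℕ, (gyr n)^[m] (Htp n φ) = Htp n φ ↔ (gyr n)^[m] φ = φ := by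
    intro m
    rw [RSaux.iter_gyr_Htp hZ m]
    constructor
    · intro h
      have h2 := congrArg (Htp n) h
      rw [RSaux.Htp_invol (RSaux.ZC_iterInv n hZ m), RSaux.Htp_invol hZ] at h2
      have h3 := congrArg ((gyr n)^[m]) h2
      rw [RSaux.gyr_iter_gyrInv hZ m] at h3
      exact h3.symm
    · intro h
      have h2 : (RSaux.gyrInv n)^[m] φ = φ := by
        calc (RSaux.gyrInv n)^[m] φ = (RSaux.gyrInv n)^[m] ((gyr n)^[m] φ) := by rw [h]
          _ = φ := RSaux.gyrInv_iter_gyr hZ m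
      rw [h2]
  have hL' : (gyr n)^[L] (Htp n φ) = Htp n φ := (hiff L).mpr hL
  have hcancel' : ∀ i j : ℕ, i < j → j < L →
      (gyr n)^[i] (Htp n φ) = (gyr n)^[j] (Htp n φ) → False := by
    intro i j hij hjL hEq
    have h2 := RSaux.period_cancel hZ' hij.le hEq
    exact hmin (j - i) (by omega) ⟨by omega, (hiff (j - i)).mp h2⟩
  have hinj' : ∀ i ∈ Finset.range L, ∀ j ∈ Finset.range L,
      (gyr n)^[i] (Htp n φ) = (gyr n)^[j] (Htp n φ) → i = j := by
    intro i hi j hj hEq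
    by_contra hne
    rcases Nat.lt_or_ge i j with h | h
    · exact hcancel' i j h (Finset.mem_range.mp hj) hEq
    · exact hcancel' j i (by omega) (Finset.mem_range.mp hi) hEq.symm
  have horb' : orbitG n (Htp n φ)
      = ↑((Finset.range L).image fun k => (gyr n)^[k] (Htp n φ)) := by
    ext ψ
    simp only [orbitG, Set.mem_range, Finset.coe_image, Set.mem_image, Finset.mem_coe,
      Finset.mem_range]
    constructor
    · rintro ⟨k, rfl⟩
      exact ⟨k % L, Nat.mod_lt _ (by omega), (RSaux.iter_mod hL' k).symm⟩
    · rintro ⟨k, _, hk⟩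
      exact ⟨k, hk⟩
  have hRHS1 : (∑ᶠ ψ ∈ orbitG n (Htp n φ), Nplaq ψ x' y')
      = ∑ k ∈ Finset.range L, Nplaq ((gyr n)^[k] (Htp n φ)) x' y' := by
    rw [horb', finsum_mem_coe_finset, Finset.sum_image hinj']
  have hRHS2 : (∑ k ∈ Finset.range L, Nplaq ((gyr n)^[k] (Htp n φ)) x' y')
      = ∑ k ∈ Finset.range L, Nplaq (Htp n ((gyr n)^[(L - k) % L] φ)) x' y' := by
    refine Finset.sum_congr rfl fun k hk => ?_
    rw [RSaux.iter_gyr_Htp hZ k,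
      RSaux.gyrInv_iter_eq hZ hL (le_of_lt (Finset.mem_range.mp hk)),
      RSaux.iter_mod hL (L - k)]
  have hRHS3 : (∑ k ∈ Finset.range L, Nplaq (Htp n ((gyr n)^[(L - k) % L] φ)) x' y')
      = ∑ k ∈ Finset.range L, Nplaq (Htp n ((gyr n)^[k] φ)) x' y' := by
    refine Finset.sum_nbij' (i := fun k => (L - k) % L) (j := fun k => (L - k) % L)
      ?_ ?_ ?_ ?_ ?_
    · intro a ha
      exact Finset.mem_range.mpr (Nat.mod_lt _ (by omega))
    · intro a ha
      exact Finset.mem_range.mpr (Nat.mod_lt _ (by omega))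
    · intro a ha
      have ha' := Finset.mem_range.mp ha
      show (L - (L - a) % L) % L = a
      rcases Nat.eq_zero_or_pos a with rfl | hpos
      · simp [Nat.mod_self]
      · rw [Nat.mod_eq_of_lt (show L - a < L by omega),
          Nat.mod_eq_of_lt (show L - (L - a) < L by omega)]
        omega
    · intro a ha
      have ha' := Finset.mem_range.mp ha
      show (L - (L - a) % L) % L = a
      rcases Nat.eq_zero_or_pos a with rfl | hpos
      · simp [Nat.mod_self]
      · rw [Nat.mod_eq_of_lt (show L - a < L by omega),
          Nat.mod_eq_of_lt (show L - (L - a) < L by omega)]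
        omega
    · intro a ha
      rfl
  -- the key edge relation, summed around the orbit
  have kl1 : ∀ (ψ : SqEdge → Bool) (e : SqEdge), validB n e = true →
      ((if Htp n ψ e then (1 : ℤ) else 0) - (if ψ e then 1 else 0))
        = RSaux.epsE e * RSaux.NcellE n 1 ψ e := fun ψ e hv => RSaux.key_local hv
  have kl2 : ∀ (ψ : SqEdge → Bool) (e : SqEdge), validB n e = true →
      ((if gyr n ψ e then (1 : ℤ) else 0) - (if Htp n ψ e then 1 else 0))
        = RSaux.epsE e * RSaux.NcellE n 0 (Htp n ψ) e := by
    intro ψ e hv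
    have h := RSaux.key_local (p := 0) (ψ := Htp n ψ) hv
    rwa [← RSaux.gyr_decomp] at h
  have MR : ∀ e : SqEdge, validB n e = true →
      (∑ k ∈ Finset.range L, RSaux.NcellE n 1 ((gyr n)^[k] φ) e)
        + (∑ k ∈ Finset.range L, RSaux.NcellE n 0 (Htp n ((gyr n)^[k] φ)) e) = 0 := by
    intro e hv
    have tele : ∑ k ∈ Finset.range L,
        ((if ((gyr n)^[k+1] φ) e then (1 : ℤ) else 0)
          - (if ((gyr n)^[k] φ) e then 1 else 0)) = 0 := by
      rw [Finset.sum_range_sub (f := fun k => if ((gyr n)^[k] φ) e then (1 : ℤ) else 0)]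
      rw [hL]
      exact sub_self _
    have expand : ∀ k : ℕ,
        ((if ((gyr n)^[k+1] φ) e then (1 : ℤ) else 0)
          - (if ((gyr n)^[k] φ) e then 1 else 0))
        = RSaux.epsE e * RSaux.NcellE n 1 ((gyr n)^[k] φ) e
          + RSaux.epsE e * RSaux.NcellE n 0 (Htp n ((gyr n)^[k] φ)) e := by
      intro k
      rw [Function.iterate_succ_apply' (gyr n) k φ]
      have e1 := kl1 ((gyr n)^[k] φ) e hv
      have e2 := kl2 ((gyr n)^[k] φ) e hv
      linarith
    rw [Finset.sum_congr rfl (fun k _ => expand k), Finset.sum_add_distrib,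
      ← Finset.mul_sum, ← Finset.mul_sum, ← mul_add] at tele
    have heps : RSaux.epsE e = 1 ∨ RSaux.epsE e = -1 := by
      cases e <;> simp [RSaux.epsE]
    rcases heps with h | h <;> rw [h] at tele <;> linarith
  -- vanishing of all plaquette orbit sums, by induction on the row
  have VAN : ∀ Y : ℕ, 1 ≤ Y → Y ≤ n - 1 → ∀ X : ℕ, 1 ≤ X → X ≤ n - 1 →
      ((X + Y) % 2 = 1 → ∑ k ∈ Finset.range L, Nplaq ((gyr n)^[k] φ) X Y = 0) ∧
      ((X + Y) % 2 = 0 →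
        ∑ k ∈ Finset.range L, Nplaq (Htp n ((gyr n)^[k] φ)) X Y = 0) := by
    intro Y
    induction Y with
    | zero => intro h; exact absurd h (by omega)
    | succ Y ih =>
      intro _ hYn X hX1 hX2
      have hvE : validB n (.h X (Y + 1)) = true := by
        simp only [validB, Bool.and_eq_true, decide_eq_true_eq]
        omega
      have hMR := MR (.h X (Y + 1)) hvE
      by_cases hp : (X + (Y + 1)) % 2 = 1
      · have c1 : ∀ ψ, RSaux.NcellE n 1 ψ (.h X (Y + 1)) = Nplaq ψ X (Y + 1) :=
          fun ψ => RSaux.NcellE_h_match hX1 hX2 (by omega) (by omega) hp ψ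
        rw [Finset.sum_congr rfl (fun k _ => c1 _)] at hMR
        refine ⟨fun _ => ?_, fun h0 => absurd h0 (by omega)⟩
        rcases Nat.eq_zero_or_pos Y with rfl | hY1
        · have c2 : ∀ ψ, RSaux.NcellE n 0 ψ (.h X 1) = 0 :=
            fun ψ => RSaux.NcellE_h_bottom hX1 hX2 (by omega) ψ
          rw [Finset.sum_eq_zero (fun k _ => c2 _)] at hMR
          linarith
        · have c2 : ∀ ψ, RSaux.NcellE n 0 ψ (.h X (Y + 1)) = Nplaq ψ X Y :=
            fun ψ => RSaux.NcellE_h_step hX1 hX2 hY1 (by omega) (by omega) ψ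
          rw [Finset.sum_congr rfl (fun k _ => c2 _)] at hMR
          have hS := (ih (by omega) (by omega) X hX1 hX2).2 (by omega)
          linarith
      · have hp0 : (X + (Y + 1)) % 2 = 0 := by omega
        have c1 : ∀ ψ, RSaux.NcellE n 0 ψ (.h X (Y + 1)) = Nplaq ψ X (Y + 1) :=
          fun ψ => RSaux.NcellE_h_match hX1 hX2 (by omega) (by omega) hp0 ψ
        rw [Finset.sum_congr rfl (fun k _ => c1 _)] at hMR
        refine ⟨fun h1 => absurd h1 (by omega), fun _ => ?_⟩
        rcases Nat.eq_zero_or_pos Y with rfl | hY1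
        · have c2 : ∀ ψ, RSaux.NcellE n 1 ψ (.h X 1) = 0 :=
            fun ψ => RSaux.NcellE_h_bottom hX1 hX2 (by omega) ψ
          rw [Finset.sum_eq_zero (fun k _ => c2 _)] at hMR
          linarith
        · have c2 : ∀ ψ, RSaux.NcellE n 1 ψ (.h X (Y + 1)) = Nplaq ψ X Y :=
            fun ψ => RSaux.NcellE_h_step hX1 hX2 hY1 (by omega) (by omega) ψ
          rw [Finset.sum_congr rfl (fun k _ => c2 _)] at hMR
          have hT := (ih (by omega) (by omega) X hX1 hX2).1 (by omega)
          linarith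
  have hx'par : (x' + y') % 2 = 0 := by
    rcases hadj with ⟨h1, h2 | h2⟩ | ⟨h1, h2 | h2⟩ <;> omega
  rw [hLHS, hRHS1, hRHS2, hRHS3]
  rw [(VAN y hy1 hy2 x hx1 hx2).1 hpar, (VAN y' hy1' hy2' x' hx1' hx2').2 hx'par]
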